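/- Every GML formula of modal depth n and width k is logically equivalent over pointed Π-labeled graphs to a finite disjunction of graded Π-types of width k and modal depth n. -/

import Mathlib

/-- A finite directed node-labeled graph: finite node set `V`, out-neighbour
finsets `adj v`, and a labeling of nodes by sets of node label symbols from `α`. -/
structure LGraph (α : Type) : Type 1 where
  V : Type
  fintypeV : Fintype V
  adj : V → Finset V
  label : V → Set α

attribute [instance] LGraph.fintypeV

/-- Formulas of graded modal logic GML over node label symbols `α`:
`⊤`, labels, negation, conjunction, and graded diamonds `◇_{≥k}`. -/
inductive GML (α : Type) : Type where
  | top : GML α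
  | lab : α → GML α
  | neg : GML α → GML α
  | and : GML α → GML α → GML α
  | dia : ℕ → GML α → GML α

/-- Truth of a GML formula at a node of a labeled graph; `dia k φ` (`◇_{≥k}φ`)
holds iff at least `k` out-neighbours satisfy `φ`. -/
def GML.sat {α : Type} (G : LGraph α) : GML α → G.V → Prop
  | .top, _ => True
  | .lab p, v => p ∈ G.label v
  | .neg φ, v => ¬ GML.sat G φ v
  | .and φ ψ, v => GML.sat G φ v ∧ GML.sat G ψ v
  | .dia k φ, v => ∃ s : Finset G.V, s ⊆ G.adj v ∧ k ≤ s.card ∧ ∀ u ∈ s, GML.sat G φ u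

/-- `⊥` as a GML formula. -/
def GML.bot {α : Type} : GML α := .neg .top

/-- `□φ := ¬◇_{≥1}¬φ`. -/
def GML.box {α : Type} (φ : GML α) : GML α := .neg (.dia 1 (.neg φ))

/-- `◇_{=n}φ := ◇_{≥n}φ ∧ ¬◇_{≥n+1}φ`. -/
def GML.diaEq {α : Type} (n : ℕ) (φ : GML α) : GML α := .and (.dia n φ) (.neg (.dia (n + 1) φ))

/-- Schemata of GMSC over node label symbols `α` and head predicates (schema variables) `ν`. -/
inductive Schema (α ν : Type) : Type where
  | top : Schema α ν
  | lab : α → Schema α ν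
  | var : ν → Schema α ν
  | neg : Schema α ν → Schema α ν
  | and : Schema α ν → Schema α ν → Schema α ν
  | dia : ℕ → Schema α ν → Schema α ν

/-- Substituting a GML formula for each head predicate of a schema. -/
def Schema.subst {α ν : Type} (σ : ν → GML α) : Schema α ν → GML α
  | .top => .top
  | .lab p => .lab p
  | .var X => σ X
  | .neg φ => .neg (φ.subst σ)
  | .and φ ψ => .and (φ.subst σ) (ψ.subst σ)
  | .dia k φ => .dia k (φ.subst σ)

/-- A GMSC program over node label symbols `α` with head predicates `ν`:
terminal clauses `X(0) :− term X`, iteration clauses `X :− iter X`, and a set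
`app` of appointed predicates. -/
structure Program (α ν : Type) where
  term : ν → GML α
  iter : ν → Schema α ν
  app : Set ν

/-- The `n`-th iteration formula `Xⁿ` of a head predicate `X`: `X⁰` is the terminal body,
and `X^{n+1}` is the iteration body with each head predicate `Y` replaced by `Yⁿ`. -/
def Program.iterFormula {α ν : Type} (P : Program α ν) : ℕ → ν → GML α
  | 0 => P.term
  | n + 1 => fun X => (P.iter X).subst (P.iterFormula n)

/-- The program accepts `(G, w)` iff some appointed predicate's iteration formula is
true at `w` in some round. -/
def Program.accepts {α ν : Type} (P : Program α ν) (G : LGraph α) (w : G.V) : Prop :=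
  ∃ X ∈ P.app, ∃ n : ℕ, GML.sat G (P.iterFormula n X) w

/-- The modal depth of a GML formula: maximal nesting of graded diamonds. -/
def GML.mdepth {α : Type} : GML α → ℕ
  | .top => 0
  | .lab _ => 0
  | .neg φ => φ.mdepth
  | .and φ ψ => max φ.mdepth ψ.mdepth
  | .dia _ φ => φ.mdepth + 1

/-- The width of a GML formula: the maximal `k` appearing in a diamond `◇_{≥k}`. -/
def GML.width {α : Type} : GML α → ℕ
  | .top => 0
  | .lab _ => 0
  | .neg φ => φ.width
  | .and φ ψ => max φ.width ψ.width
  | .dia k φ => max k φ.width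

/-- Finite conjunction of a list of GML formulas. -/
def bigAnd {α : Type} : List (GML α) → GML α
  | [] => .top
  | φ :: l => .and φ (bigAnd l)

/-- Abstract data of a graded `α`-type of width `k`: at depth 0, which labels hold;
at depth `n+1`, the depth-0 data together with, for each depth-`n` type, its number of
out-neighbour occurrences counted up to the cap `k` (value `k` meaning `≥ k`). -/
def TypeData (α : Type) (k : ℕ) : ℕ → Type
  | 0 => α → Bool
  | n + 1 => (α → Bool) × (TypeData α k n → Fin (k + 1))

noncomputable def tdInst (α : Type) [Fintype α] [DecidableEq α] (k : ℕ) :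
    ∀ n, PSigma fun _ : Fintype (TypeData α k n) => DecidableEq (TypeData α k n)
  | 0 =>
    ⟨inferInstanceAs (Fintype (α → Bool)), inferInstanceAs (DecidableEq (α → Bool))⟩
  | n + 1 =>
    letI := (tdInst α k n).1
    letI := (tdInst α k n).2
    ⟨inferInstanceAs (Fintype ((α → Bool) × (TypeData α k n → Fin (k + 1)))),
     inferInstanceAs (DecidableEq ((α → Bool) × (TypeData α k n → Fin (k + 1))))⟩

noncomputable instance {α : Type} [Fintype α] [DecidableEq α] {k n : ℕ} :
    Fintype (TypeData α k n) := (tdInst α k n).1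

noncomputable instance {α : Type} [Fintype α] [DecidableEq α] {k n : ℕ} :
    DecidableEq (TypeData α k n) := (tdInst α k n).2

/-- The depth-0 part of a type as a GML formula: the conjunction over `p ∈ α` of `p` or `¬p`. -/
noncomputable def baseFormula {α : Type} [Fintype α] [DecidableEq α] (t : α → Bool) : GML α :=
  bigAnd ((Finset.univ : Finset α).toList.map fun p =>
    if t p then GML.lab p else GML.neg (GML.lab p))

/-- The GML formula of a graded type of width `k` and modal depth `n`: at depth `n+1`, the
conjunction of the depth-0 type with, for each depth-`n` type `τ` counted `ℓ < k` times the
conjunct `◇_{=ℓ}τ`, and for each `τ` counted `≥ k` times the conjunct `◇_{≥k}τ`. -/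
noncomputable def TypeData.toFormula {α : Type} [Fintype α] [DecidableEq α] {k : ℕ} :
    ∀ {n : ℕ}, TypeData α k n → GML α
  | 0, t => baseFormula t
  | n + 1, t =>
    GML.and (baseFormula (t.1))
      (bigAnd ((Finset.univ : Finset (TypeData α k n)).toList.map fun τ =>
        if (t.2 τ : ℕ) < k then GML.diaEq (t.2 τ) (TypeData.toFormula τ)
        else GML.dia k (TypeData.toFormula τ)))

open Classical

lemma sat_bigAnd {α : Type} (G : LGraph α) (v : G.V) :
    ∀ l : List (GML α), GML.sat G (bigAnd l) v ↔ ∀ φ ∈ l, GML.sat G φ v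
  | [] => by simp [bigAnd, GML.sat]
  | φ :: l => by simp [bigAnd, GML.sat, sat_bigAnd G v l]

lemma sat_dia_iff {α : Type} (G : LGraph α) (m : ℕ) (ψ : GML α) (v : G.V) :
    GML.sat G (.dia m ψ) v ↔ m ≤ ((G.adj v).filter (fun u => GML.sat G ψ u)).card := by
  constructor
  · rintro ⟨s, hsub, hcard, hall⟩
    refine hcard.trans (Finset.card_le_card ?_)
    intro u hu
    simp only [Finset.mem_filter]
    exact ⟨hsub hu, hall u hu⟩
  · intro h
    exact ⟨(G.adj v).filter (fun u => GML.sat G ψ u), Finset.filter_subset _ _, h,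
      fun u hu => (Finset.mem_filter.mp hu).2⟩

lemma sat_diaEq_iff {α : Type} (G : LGraph α) (ℓ : ℕ) (ψ : GML α) (v : G.V) :
    GML.sat G (GML.diaEq ℓ ψ) v ↔ ((G.adj v).filter (fun u => GML.sat G ψ u)).card = ℓ := by
  show GML.sat G (.dia ℓ ψ) v ∧ ¬ GML.sat G (.dia (ℓ + 1) ψ) v ↔ _
  rw [sat_dia_iff, sat_dia_iff]
  omega

lemma sat_baseFormula {α : Type} [Fintype α] [DecidableEq α] (G : LGraph α) (v : G.V)
    (t : α → Bool) :
    GML.sat G (baseFormula t) v ↔ ∀ p, (t p = true ↔ p ∈ G.label v) := by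
  simp only [baseFormula, sat_bigAnd, List.mem_map, Finset.mem_toList, Finset.mem_univ,
    true_and]
  constructor
  · intro h p
    have := h _ ⟨p, rfl⟩
    by_cases hp : t p <;> simp [hp, GML.sat] at this ⊢ <;> tauto
  · rintro h _ ⟨p, rfl⟩
    by_cases hp : t p
    · simpa [hp, GML.sat] using (h p).mp hp
    · simp only [hp, if_false]
      exact fun hm => hp ((h p).mpr hm)

noncomputable def typeOf {α : Type} [Fintype α] [DecidableEq α] (G : LGraph α) (k : ℕ) :
    ∀ n : ℕ, G.V → TypeData α k n
  | 0 => fun v p => decide (p ∈ G.label v)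
  | n + 1 => fun v =>
      ((fun p => decide (p ∈ G.label v)),
       fun τ => ⟨min (((G.adj v).filter (fun u => typeOf G k n u = τ)).card) k,
         Nat.lt_succ_of_le (min_le_right _ _)⟩)
lemma sat_toFormula_iff {α : Type} [Fintype α] [DecidableEq α] (k : ℕ) :
    ∀ (n : ℕ) (G : LGraph α) (v : G.V) (τ : TypeData α k n),
      GML.sat G (TypeData.toFormula τ) v ↔ τ = typeOf G k n v
  | 0, G, v, τ => by
    rw [show TypeData.toFormula τ = baseFormula τ from rfl, sat_baseFormula G v τ]
    constructor
    · intro h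
      funext p
      have := h p
      by_cases hp : p ∈ G.label v <;> simp [typeOf, hp] at this ⊢ <;> tauto
    · intro h p
      subst h
      simp [typeOf]
  | n + 1, G, v, τ => by
    have hfil : ∀ σ : TypeData α k n,
        (G.adj v).filter (fun u => GML.sat G (TypeData.toFormula σ) u) =
          (G.adj v).filter (fun u => typeOf G k n u = σ) :=
      fun σ => Finset.filter_congr fun u _ =>
        (sat_toFormula_iff k n G u σ).trans eq_comm
    show GML.sat G (baseFormula τ.1) v ∧ GML.sat G (bigAnd _) v ↔ _
    rw [sat_baseFormula, sat_bigAnd]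
    erw [Prod.ext_iff]
    simp only [List.mem_map, Finset.mem_toList, Finset.mem_univ, true_and,
      forall_exists_index]
    constructor
    · rintro ⟨hbase, hrest⟩
      constructor
      · funext p
        have := hbase p
        by_cases hp : p ∈ G.label v <;> simp [typeOf, hp] at this ⊢ <;> tauto
      · funext σ
        have h := hrest _ σ rfl
        have hσ : (τ.2 σ : ℕ) ≤ k := Nat.lt_succ_iff.mp (τ.2 σ).2
        apply Fin.ext
        show (τ.2 σ : ℕ) = min (((G.adj v).filter (fun u => typeOf G k n u = σ)).card) k
        by_cases hk : (τ.2 σ : ℕ) < k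
        · rw [if_pos hk, sat_diaEq_iff, hfil] at h
          omega
        · rw [if_neg hk, sat_dia_iff, hfil] at h
          omega
    · rintro ⟨hbase, hcnt⟩
      constructor
      · intro p
        have := congrFun hbase p
        by_cases hp : p ∈ G.label v <;> simp [typeOf, hp] at this ⊢ <;> tauto
      · rintro _ σ rfl
        have hval : (τ.2 σ : ℕ) =
            min (((G.adj v).filter (fun u => typeOf G k n u = σ)).card) k :=
          congrArg Fin.val (congrFun hcnt σ)
        by_cases hk : (τ.2 σ : ℕ) < k
        · rw [if_pos hk, sat_diaEq_iff, hfil]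
          omega
        · rw [if_neg hk, sat_dia_iff, hfil]
          omega
lemma typeOf_label {α : Type} [Fintype α] [DecidableEq α] {G G' : LGraph α} {k n : ℕ}
    {w : G.V} {w' : G'.V} (h : typeOf G k n w = typeOf G' k n w') (p : α) :
    p ∈ G.label w ↔ p ∈ G'.label w' := by
  cases n with
  | zero => simpa [typeOf, decide_eq_decide] using congrFun h p
  | succ n => simpa [typeOf, decide_eq_decide] using congrFun (congrArg Prod.fst h) p

lemma le_sum_iff_of_min_eq {β : Type*} {t : Finset β} {a b : β → ℕ} {k m : ℕ} (hm : m ≤ k)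
    (h : ∀ i ∈ t, min (a i) k = min (b i) k) :
    (m ≤ ∑ i ∈ t, a i ↔ m ≤ ∑ i ∈ t, b i) := by
  by_cases hex : ∃ i ∈ t, k ≤ a i
  · obtain ⟨i, hi, hik⟩ := hex
    have hbk : k ≤ b i := by have := h i hi; omega
    have h1 : k ≤ ∑ i ∈ t, a i :=
      hik.trans (Finset.single_le_sum (fun _ _ => Nat.zero_le _) hi)
    have h2 : k ≤ ∑ i ∈ t, b i :=
      hbk.trans (Finset.single_le_sum (fun _ _ => Nat.zero_le _) hi)
    omega
  · push_neg at hex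
    have : ∀ i ∈ t, a i = b i := by
      intro i hi
      have h1 := h i hi
      have h2 := hex i hi
      omega
    rw [Finset.sum_congr rfl this]

lemma sat_iff_of_typeOf_eq {α : Type} [Fintype α] [DecidableEq α] {k : ℕ} :
    ∀ (φ : GML α) (n : ℕ), φ.mdepth ≤ n → φ.width ≤ k →
    ∀ (G : LGraph α) (w : G.V) (G' : LGraph α) (w' : G'.V),
      typeOf G k n w = typeOf G' k n w' → (GML.sat G φ w ↔ GML.sat G' φ w')
  | .top, n, _, _, G, w, G', w', _ => Iff.rfl
  | .lab p, n, _, _, G, w, G', w', h => typeOf_label h p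
  | .neg φ, n, hd, hw, G, w, G', w', h =>
    not_congr (sat_iff_of_typeOf_eq φ n hd hw G w G' w' h)
  | .and φ ψ, n, hd, hw, G, w, G', w', h => by
    simp only [GML.mdepth, GML.width, max_le_iff] at hd hw
    exact and_congr (sat_iff_of_typeOf_eq φ n hd.1 hw.1 G w G' w' h)
      (sat_iff_of_typeOf_eq ψ n hd.2 hw.2 G w G' w' h)
  | .dia m ψ, n, hd, hw, G, w, G', w', h => by
    simp only [GML.mdepth, GML.width, max_le_iff] at hd hw
    obtain ⟨n, rfl⟩ : ∃ n', n = n' + 1 := ⟨n - 1, by omega⟩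
    have hdψ : ψ.mdepth ≤ n := by omega
    -- P τ : some pointed graph of type τ satisfies ψ
    set P : TypeData α k n → Prop :=
      fun τ => ∃ (H : LGraph α) (u : H.V), typeOf H k n u = τ ∧ GML.sat H ψ u with hP
    have key : ∀ (H : LGraph α) (u : H.V), GML.sat H ψ u ↔ P (typeOf H k n u) := by
      intro H u
      constructor
      · intro hs; exact ⟨H, u, rfl, hs⟩
      · rintro ⟨H', u', htu, hs⟩
        exact (sat_iff_of_typeOf_eq ψ n hdψ hw.2 H' u' H u htu).mp hs
    have count : ∀ (H : LGraph α) (u : H.V),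
        ((H.adj u).filter (fun x => GML.sat H ψ x)).card =
          ∑ τ ∈ Finset.univ.filter P,
            ((H.adj u).filter (fun x => typeOf H k n x = τ)).card := by
      intro H u
      have hfc : (H.adj u).filter (fun x => GML.sat H ψ x) =
          (H.adj u).filter (fun x => P (typeOf H k n x)) :=
        Finset.filter_congr fun x _ => key H x
      rw [hfc]
      rw [Finset.card_eq_sum_card_fiberwise
        (f := fun x => typeOf H k n x) (t := Finset.univ.filter P)
        (fun x hx => by
          simp only [Finset.mem_filter, Finset.mem_univ, true_and]
          exact Finset.mem_coe.mpr (Finset.mem_filter.mpr ⟨Finset.mem_univ _, (Finset.mem_filter.mp hx).2⟩))]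
      refine Finset.sum_congr rfl fun τ hτ => ?_
      congr 1
      rw [Finset.filter_filter]
      refine Finset.filter_congr fun x _ => ?_
      have hPτ : P τ := (Finset.mem_filter.mp hτ).2
      constructor
      · exact fun hh => hh.2
      · exact fun hh => ⟨hh ▸ hPτ, hh⟩
    rw [sat_dia_iff, sat_dia_iff, count, count]
    refine le_sum_iff_of_min_eq hw.1 fun τ _ => ?_
    have := congrArg Fin.val (congrFun (congrArg Prod.snd h) τ)
    simpa [typeOf] using this
/-- Every GML formula of modal depth (at most) `n` and width (at most) `k`
is logically equivalent over pointed labeled graphs to a finite disjunction of graded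
`α`-types of width `k` and modal depth `n`. -/
theorem gml_equivalent_to_finite_disjunction_of_types
    {α : Type} [Fintype α] [DecidableEq α] (k n : ℕ) (φ : GML α)
    (hd : φ.mdepth ≤ n) (hw : φ.width ≤ k) :
    ∃ T : Finset (TypeData α k n), ∀ (G : LGraph α) (w : G.V),
      GML.sat G φ w ↔ ∃ τ ∈ T, GML.sat G τ.toFormula w := by
  refine ⟨Finset.univ.filter
    (fun τ => ∃ (H : LGraph α) (u : H.V), typeOf H k n u = τ ∧ GML.sat H φ u), ?_⟩
  intro G w
  constructor
  · intro h
    refine ⟨typeOf G k n w, ?_, ?_⟩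
    · simp only [Finset.mem_filter, Finset.mem_univ, true_and]
      exact ⟨G, w, rfl, h⟩
    · exact (sat_toFormula_iff k n G w _).mpr rfl
  · rintro ⟨τ, hτ, hs⟩
    simp only [Finset.mem_filter, Finset.mem_univ, true_and] at hτ
    obtain ⟨H, u, htu, hsat⟩ := hτ
    have hty : τ = typeOf G k n w := (sat_toFormula_iff k n G w τ).mp hs
    exact (sat_iff_of_typeOf_eq φ n hd hw H u G w (htu.trans hty)).mp hsat
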